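/- Suppose the pressure in Lagrangian labels satisfies P_q = -ρ₀(kc² - 2Ωc + g)e^{-k(r+f(s))} sin(k(q-ct)) and P_s = -ρ₀(kc²-2Ωc) f'(s) e^{-2k(r+f(s))} - ρ₀(βcs + f'(s)g) e^{-k(r+f(s))} cos(k(q-ct)), for a twice differentiable P and smooth f with f(0) = 0. Then equality of mixed partials P_{qs} = P_{sq} forces f'(s) = βs/(kc - 2Ω), i.e. f(s) = βs²/(2(kc - 2Ω)), provided kc - 2Ω ≠ 0. -/

import Mathlib

theorem mixed_partials_force_decay_function
    (ρ₀ k c Ω β g r t : ℝ)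
    (hρ₀ : 0 < ρ₀) (hk : 0 < k) (hc : c ≠ 0) (hΩ : 0 < Ω) (hβ : 0 < β) (hg : 0 < g)
    (hkc : k * c - 2 * Ω ≠ 0)
    (P : ℝ → ℝ → ℝ) (hP : ContDiff ℝ 2 (fun p : ℝ × ℝ => P p.1 p.2))
    (f : ℝ → ℝ) (hfsmooth : ContDiff ℝ 2 f) (hf0 : f 0 = 0)
    (hPq : ∀ q s, deriv (fun q' => P q' s) q =
      -ρ₀ * (k * c ^ 2 - 2 * Ω * c + g) * Real.exp (-(k * (r + f s))) * Real.sin (k * (q - c * t)))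
    (hPs : ∀ q s, deriv (fun s' => P q s') s =
      -ρ₀ * (k * c ^ 2 - 2 * Ω * c) * deriv f s * Real.exp (-(2 * k * (r + f s)))
        - ρ₀ * (β * c * s + deriv f s * g) * Real.exp (-(k * (r + f s))) * Real.cos (k * (q - c * t))) :
    (∀ s, deriv f s = β * s / (k * c - 2 * Ω)) ∧
    (∀ s, f s = β * s ^ 2 / (2 * (k * c - 2 * Ω))) := by
  have h2 : (2 : WithTop ℕ∞) ≠ 0 := by norm_num
  have hfd : Differentiable ℝ f := hfsmooth.differentiable h2
  have hPdiffq : ∀ s, Differentiable ℝ (fun q' => P q' s) := by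
    intro s
    exact (hP.differentiable h2).comp (differentiable_id.prodMk (differentiable_const s))
  have hPdiffs : ∀ q, Differentiable ℝ (fun s' => P q s') := by
    intro q
    exact (hP.differentiable h2).comp ((differentiable_const q).prodMk differentiable_id)
  -- Step 1: integrate hPq in q
  have hΦd : ∀ s q', HasDerivAt
      (fun q'' => (ρ₀ * (k * c ^ 2 - 2 * Ω * c + g) / k) * Real.exp (-(k * (r + f s))) *
        (Real.cos (k * (q'' - c * t)) - 1))
      ((ρ₀ * (k * c ^ 2 - 2 * Ω * c + g) / k) * Real.exp (-(k * (r + f s))) *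
        (-Real.sin (k * (q' - c * t)) * k)) q' := by
    intro s q'
    have h1 : HasDerivAt (fun q'' : ℝ => k * (q'' - c * t)) k q' := by
      simpa using ((hasDerivAt_id q').sub_const (c * t)).const_mul k
    exact (h1.cos.sub_const 1).const_mul _
  have key : ∀ q s, P q s = P (c * t) s +
      (ρ₀ * (k * c ^ 2 - 2 * Ω * c + g) / k) * Real.exp (-(k * (r + f s))) *
        (Real.cos (k * (q - c * t)) - 1) := by
    intro q s
    set W : ℝ → ℝ := fun q' => P q' s -
      (ρ₀ * (k * c ^ 2 - 2 * Ω * c + g) / k) * Real.exp (-(k * (r + f s))) *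
        (Real.cos (k * (q' - c * t)) - 1) with hW
    have hWdiff : Differentiable ℝ W :=
      fun q' => ((hPdiffq s q').sub (hΦd s q').differentiableAt)
    have hW' : ∀ q', deriv W q' = 0 := by
      intro q'
      rw [hW]
      rw [deriv_fun_sub (hPdiffq s q') (hΦd s q').differentiableAt, hPq, (hΦd s q').deriv]
      field_simp
      ring
    have hconst := is_const_of_deriv_eq_zero hWdiff hW' q (c * t)
    simp only [hW, sub_self, mul_zero, Real.cos_zero, sub_self, mul_zero, sub_zero] at hconst
    linarith [hconst]
  -- Step 2: differentiate in s at q = c*t + π/k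
  have hderiv : ∀ s, deriv f s = β * s / (k * c - 2 * Ω) := by
    intro s
    set q : ℝ := c * t + Real.pi / k with hq
    have hcosq : Real.cos (k * (q - c * t)) = -1 := by
      have : k * (q - c * t) = Real.pi := by
        rw [hq]; field_simp; ring
      rw [this, Real.cos_pi]
    have hfun : (fun s' => P q s') = fun s' => P (c * t) s' +
        (ρ₀ * (k * c ^ 2 - 2 * Ω * c + g) / k) * Real.exp (-(k * (r + f s'))) *
          (Real.cos (k * (q - c * t)) - 1) := funext fun s' => key q s'
    have hf' : HasDerivAt f (deriv f s) s := (hfd s).hasDerivAt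
    have h1 : HasDerivAt (fun s' => -(k * (r + f s'))) (-(k * deriv f s)) s := by
      exact ((hf'.const_add r).const_mul k).neg
    have hd1 : HasDerivAt (fun s' => (ρ₀ * (k * c ^ 2 - 2 * Ω * c + g) / k) *
        Real.exp (-(k * (r + f s'))) * (Real.cos (k * (q - c * t)) - 1))
        ((ρ₀ * (k * c ^ 2 - 2 * Ω * c + g) / k) *
          (Real.exp (-(k * (r + f s))) * (-(k * deriv f s))) * (Real.cos (k * (q - c * t)) - 1)) s :=
      (h1.exp.const_mul _).mul_const _
    have heq : deriv (fun s' => P q s') s = deriv (fun s' => P (c * t) s') s +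
        (ρ₀ * (k * c ^ 2 - 2 * Ω * c + g) / k) *
          (Real.exp (-(k * (r + f s))) * (-(k * deriv f s))) * (Real.cos (k * (q - c * t)) - 1) := by
      rw [hfun, deriv_fun_add (hPdiffs (c * t) s) hd1.differentiableAt, hd1.deriv]
    rw [hPs q s, hPs (c * t) s, hcosq] at heq
    simp only [sub_self, mul_zero, Real.cos_zero, mul_one, mul_neg_one] at heq
    have hE : (0 : ℝ) < Real.exp (-(k * (r + f s))) := Real.exp_pos _
    have h3 : ((2 * ρ₀ * Real.exp (-(k * (r + f s))) * k) * c) * (deriv f s * (k * c - 2 * Ω)) =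
        ((2 * ρ₀ * Real.exp (-(k * (r + f s))) * k) * c) * (β * s) := by
      field_simp at heq
      linear_combination (-(ρ₀ * k)) * heq
    have h4 := mul_left_cancel₀
      (mul_ne_zero (by positivity : (2 * ρ₀ * Real.exp (-(k * (r + f s))) * k) ≠ 0) hc) h3
    rw [eq_div_iff hkc]
    exact h4
  refine ⟨hderiv, ?_⟩
  have hder0 : ∀ x, deriv (fun s => f s - β * s ^ 2 / (2 * (k * c - 2 * Ω))) x = 0 := by
    intro x
    have hpoly : HasDerivAt (fun s : ℝ => β * s ^ 2 / (2 * (k * c - 2 * Ω)))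
        (β * (2 * x ^ 1) / (2 * (k * c - 2 * Ω))) x :=
      (((hasDerivAt_pow 2 x).const_mul β).div_const _)
    rw [deriv_fun_sub (hfd x) hpoly.differentiableAt, hpoly.deriv, hderiv x]
    field_simp
    ring
  have hdiff : Differentiable ℝ (fun s => f s - β * s ^ 2 / (2 * (k * c - 2 * Ω))) := by
    intro x
    exact (hfd x).sub (((hasDerivAt_pow 2 x).const_mul β).div_const _).differentiableAt
  intro s
  have hconst := is_const_of_deriv_eq_zero hdiff hder0 s 0
  simp [hf0] at hconst
  linarith
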